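/- arXiv:2509.17624 — 2 statements merged into one kernel-verified Lean document; each statement's English description precedes it below -/
import Mathlib

section
/- Let γ ∈ ℤ^{d+2} be a vector with all components nonzero, r of which are negative and s positive (r + s = d + 2), Σ_j γ_j = 0, and gcd(γ_1,…,γ_{d+2}) = 1; let δ ∈ ℤ^{d+2} with Σ_j δ_j ≡ 0 (mod N). If (α; β) ∈ ℚ^n × ℚ^n are the hypergeometric parameters obtained by cancelling common factors in the rational function Π_{γ_j<0}(T^{-γ_j} - ζ_N^{δ_j}) / Π_{γ_j>0}(T^{γ_j} - ζ_N^{-δ_j}) = Π_j(T - e^{2πiα_j}) / Π_j(T - e^{2πiβ_j}), then Σ_{i=1}^n (α_i - β_i) ≡ (r - s)/2 (mod ℤ); in particular Σ_i α_i - β_i is a half-integer. -/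
open Polynomial

/-- `e2pi x = e^{2πix}`. -/
noncomputable def e2pi (x : ℚ) : ℂ := Complex.exp (2 * Real.pi * Complex.I * x)

/-- The polynomial `∏ⱼ (T - e^{2πi αⱼ})` attached to hypergeometric parameters. -/
noncomputable def paramPoly {n : ℕ} (α : Fin n → ℚ) : Polynomial ℂ :=
  ∏ i, (X - C (e2pi (α i)))

lemma e2pi_add (x y : ℚ) : e2pi (x + y) = e2pi x * e2pi y := by
  unfold e2pi
  rw [← Complex.exp_add]
  push_cast
  ring_nf

lemma e2pi_sum {ι : Type*} (S : Finset ι) (f : ι → ℚ) :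
    e2pi (∑ j ∈ S, f j) = ∏ j ∈ S, e2pi (f j) := by
  classical
  induction S using Finset.cons_induction with
  | empty => simp [e2pi]
  | cons a s ha ih => rw [Finset.sum_cons, Finset.prod_cons, e2pi_add, ih]

lemma e2pi_half : e2pi (1/2) = -1 := by
  unfold e2pi
  push_cast
  rw [show (2 : ℂ) * Real.pi * Complex.I * (1/2) = Real.pi * Complex.I by ring]
  exact Complex.exp_pi_mul_I

lemma e2pi_inj {x y : ℚ} (h : e2pi x = e2pi y) : ∃ z : ℤ, x - y = z := by
  unfold e2pi at h
  rw [Complex.exp_eq_exp_iff_exists_int] at h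
  obtain ⟨z, hz⟩ := h
  refine ⟨z, ?_⟩
  have h2 : (2 : ℂ) * Real.pi * Complex.I ≠ 0 := by
    simp [Real.pi_ne_zero, Complex.I_ne_zero]
  have key : ((x - y : ℚ) : ℂ) = (z : ℂ) := by
    apply mul_left_cancel₀ h2
    push_cast
    linear_combination hz
  exact_mod_cast key

theorem stmt_11 (d N n : ℕ) (hN : 0 < N)
    (γ δ : Fin (d + 2) → ℤ)
    (hγ0 : ∀ j, γ j ≠ 0) (hγsum : ∑ j, γ j = 0)
    (hgcd : Finset.univ.gcd γ = 1)
    (hδ : (N : ℤ) ∣ ∑ j, δ j)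
    (r s : ℕ)
    (hr : r = (Finset.univ.filter fun j => γ j < 0).card)
    (hs : s = (Finset.univ.filter fun j => 0 < γ j).card)
    (α β : Fin n → ℚ)
    (hα : ∀ i, α i ∈ Set.Ioc (0 : ℚ) 1) (hβ : ∀ i, β i ∈ Set.Ioc (0 : ℚ) 1)
    (hcop : IsCoprime (paramPoly α) (paramPoly β))
    (heq : (∏ j ∈ Finset.univ.filter fun j => γ j < 0,
          (X ^ (-γ j).toNat - C (e2pi ((δ j : ℚ) / N)))) * paramPoly β =
        (∏ j ∈ Finset.univ.filter fun j => 0 < γ j,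
          (X ^ (γ j).toNat - C (e2pi (-(δ j : ℚ) / N)))) * paramPoly α) :
    ∃ z : ℤ, (∑ i, (α i - β i)) = ((r : ℚ) - s) / 2 + z := by
  classical
  have h0 := congrArg (Polynomial.eval 0) heq
  simp only [eval_mul, paramPoly, eval_prod] at h0
  have e1 : (∏ j ∈ Finset.univ.filter fun j => γ j < 0,
      eval 0 (X ^ (-γ j).toNat - C (e2pi ((δ j : ℚ) / N))))
      = ∏ j ∈ Finset.univ.filter fun j => γ j < 0, e2pi ((δ j : ℚ) / N + 1/2) := by
    refine Finset.prod_congr rfl fun j hj => ?_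
    simp only [Finset.mem_filter] at hj
    have hne : (-γ j).toNat ≠ 0 := by omega
    rw [eval_sub, eval_pow, eval_X, eval_C, zero_pow hne, zero_sub, ← neg_one_mul,
      ← e2pi_half, ← e2pi_add, add_comm]
  have e2 : (∏ j ∈ Finset.univ.filter fun j => 0 < γ j,
      eval 0 (X ^ (γ j).toNat - C (e2pi (-(δ j : ℚ) / N))))
      = ∏ j ∈ Finset.univ.filter fun j => 0 < γ j, e2pi (-(δ j : ℚ) / N + 1/2) := by
    refine Finset.prod_congr rfl fun j hj => ?_
    simp only [Finset.mem_filter] at hj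
    have hne : (γ j).toNat ≠ 0 := by omega
    rw [eval_sub, eval_pow, eval_X, eval_C, zero_pow hne, zero_sub, ← neg_one_mul,
      ← e2pi_half, ← e2pi_add, add_comm]
  have e3 : (∏ i, eval 0 (X - C (e2pi (β i)))) = ∏ i, e2pi (β i + 1/2) := by
    refine Finset.prod_congr rfl fun i _ => ?_
    rw [eval_sub, eval_X, eval_C, zero_sub, ← neg_one_mul, ← e2pi_half, ← e2pi_add,
      add_comm]
  have e4 : (∏ i, eval 0 (X - C (e2pi (α i)))) = ∏ i, e2pi (α i + 1/2) := by
    refine Finset.prod_congr rfl fun i _ => ?_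
    rw [eval_sub, eval_X, eval_C, zero_sub, ← neg_one_mul, ← e2pi_half, ← e2pi_add,
      add_comm]
  rw [e1, e2, e3, e4, ← e2pi_sum, ← e2pi_sum, ← e2pi_sum, ← e2pi_sum,
    ← e2pi_add, ← e2pi_add] at h0
  obtain ⟨z0, hz0⟩ := e2pi_inj h0
  obtain ⟨k, hk⟩ := hδ
  have hpart : (∑ j ∈ Finset.univ.filter fun j => γ j < 0, δ j)
      + (∑ j ∈ Finset.univ.filter fun j => 0 < γ j, δ j) = ∑ j, δ j := by
    rw [show (Finset.univ.filter fun j => 0 < γ j)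
        = Finset.univ.filter fun j => ¬ γ j < 0 from
      Finset.filter_congr fun j _ => by have := hγ0 j; constructor <;> intro <;> omega]
    exact Finset.sum_filter_add_sum_filter_not _ _ _
  refine ⟨k - z0, ?_⟩
  have hNQ : (N : ℚ) ≠ 0 := Nat.cast_ne_zero.mpr hN.ne'
  have hsum1 : (∑ j ∈ Finset.univ.filter fun j => γ j < 0, ((δ j : ℚ) / N + 1/2))
      = (∑ j ∈ Finset.univ.filter fun j => γ j < 0, (δ j : ℚ)) / N + r / 2 := by
    rw [Finset.sum_add_distrib, Finset.sum_div, Finset.sum_const, hr]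
    push_cast; ring
  have hsum2 : (∑ j ∈ Finset.univ.filter fun j => 0 < γ j, (-(δ j : ℚ) / N + 1/2))
      = -(∑ j ∈ Finset.univ.filter fun j => 0 < γ j, (δ j : ℚ)) / N + s / 2 := by
    rw [Finset.sum_add_distrib, Finset.sum_const, hs]
    simp only [neg_div, Finset.sum_neg_distrib, ← Finset.sum_div, nsmul_eq_mul]
    push_cast
    ring
  have hsumb : (∑ i, (β i + 1/2)) = (∑ i, β i) + n / 2 := by
    rw [Finset.sum_add_distrib, Finset.sum_const]
    simp
    ring
  have hsuma : (∑ i, (α i + 1/2)) = (∑ i, α i) + n / 2 := by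
    rw [Finset.sum_add_distrib, Finset.sum_const]
    simp
    ring
  rw [hsum1, hsum2, hsumb, hsuma] at hz0
  have hpartQ : (∑ j ∈ Finset.univ.filter fun j => γ j < 0, (δ j : ℚ))
      + (∑ j ∈ Finset.univ.filter fun j => 0 < γ j, (δ j : ℚ)) = (N : ℚ) * k := by
    have := congrArg (fun x : ℤ => (x : ℚ)) (hpart.trans hk)
    push_cast at this
    exact this
  have hpartQ' : (∑ j ∈ Finset.univ.filter fun j => γ j < 0, (δ j : ℚ)) / N
      + (∑ j ∈ Finset.univ.filter fun j => 0 < γ j, (δ j : ℚ)) / N = (k : ℚ) := by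
    rw [← add_div, hpartQ, mul_comm, mul_div_assoc, div_self hNQ, mul_one]
  rw [Finset.sum_sub_distrib]
  push_cast at hz0 ⊢
  simp only [neg_div] at hz0
  linarith [hz0, hpartQ']
end

section
/- Let A(x) ∈ ℚ(ζ_n)[x] be a monic polynomial all of whose roots are roots of unity. Then A(x) can be written as (Π_{j=1}^l (x^{k_j} - ζ_n^{r_j})) / (Π_{j=l+1}^{l+l'} (x^{k_j} - ζ_n^{r_j})) for some nonnegative integer l', positive integers l, k_1,…,k_{l+l'}, r_1,…,r_{l+l'}, with Σ_{j≤l} k_j - Σ_{j>l} k_j = deg A and gcd(k_1,…,k_{l+l'}) = 1. -/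
set_option maxHeartbeats 2000000

open Polynomial IntermediateField



lemma auxPowEqPow {α : ℂ} {m : ℕ} (hm : 0 < m) (h : IsPrimitiveRoot α m) {i j : ℕ} :
    α ^ i = α ^ j ↔ (m : ℤ) ∣ (i : ℤ) - (j : ℤ) := by
  have hα : α ≠ 0 := by
    intro h0
    have := h.pow_eq_one
    rw [h0, zero_pow hm.ne'] at this
    exact zero_ne_one this
  have hz : ∀ i : ℕ, α ^ i = α ^ (i : ℤ) := fun i => (zpow_natCast α i).symm
  rw [hz, hz]
  constructor
  · intro hij
    have h1 : α ^ ((i : ℤ) - (j : ℤ)) = 1 := by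
      rw [zpow_sub₀ hα, hij]
      exact div_self (zpow_ne_zero _ hα)
    exact (h.zpow_eq_one_iff_dvd _).mp h1
  · intro hd
    have h1 : α ^ ((i : ℤ) - (j : ℤ)) = 1 := (h.zpow_eq_one_iff_dvd _).mpr hd
    calc α ^ (i : ℤ) = α ^ ((j : ℤ) + ((i : ℤ) - (j : ℤ))) := by congr 1; ring
    _ = α ^ (j : ℤ) * α ^ ((i : ℤ) - (j : ℤ)) := zpow_add₀ hα _ _
    _ = α ^ (j : ℤ) := by rw [h1, mul_one]

lemma auxTdvd (n m₁ m : ℕ) (h : m₁ ∣ m) : (m₁ / Nat.gcd n m₁) ∣ (m / Nat.gcd n m) := by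
  obtain ⟨s, rfl⟩ := h
  have hg : Nat.gcd n (m₁ * s) ∣ Nat.gcd n m₁ * s :=
    (gcd_mul_dvd_mul_gcd n m₁ s).trans (mul_dvd_mul_left _ (Nat.gcd_dvd_right n s))
  rcases Nat.eq_zero_or_pos m₁ with rfl | hm₁
  · simp
  rw [Nat.dvd_div_iff_mul_dvd (Nat.gcd_dvd_right n (m₁ * s))]
  calc Nat.gcd n (m₁ * s) * (m₁ / Nat.gcd n m₁) ∣ (Nat.gcd n m₁ * s) * (m₁ / Nat.gcd n m₁) :=
        mul_dvd_mul_right hg _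
    _ = m₁ * s := by
        rw [mul_comm (Nat.gcd n m₁) s, mul_assoc, Nat.mul_div_cancel' (Nat.gcd_dvd_right n m₁),
          mul_comm]



lemma auxAevalZeroIff (K : IntermediateField ℚ ℂ) {α θ : ℂ}
    (hmp : minpoly K α = minpoly K θ) (hα : IsIntegral K α)
    (p : K[X]) : aeval α p = 0 → aeval θ p = 0 := by
  intro h
  obtain ⟨q, rfl⟩ := minpoly.dvd K α h
  rw [map_mul, hmp, minpoly.aeval, zero_mul]

lemma auxRootMult (K : IntermediateField ℚ ℂ) {α θ : ℂ}
    (hα : IsIntegral K α) (hθ : IsIntegral K θ) (hmp : minpoly K α = minpoly K θ)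
    (p : K[X]) :
      rootMultiplicity α (p.map (algebraMap K ℂ)) =
        rootMultiplicity θ (p.map (algebraMap K ℂ)) := by
  have hinj : Function.Injective (algebraMap K ℂ) := (algebraMap K ℂ).injective
  suffices H : ∀ N p_1, Polynomial.natDegree p_1 = N →
      rootMultiplicity α (p_1.map (algebraMap K ℂ)) =
        rootMultiplicity θ (p_1.map (algebraMap K ℂ)) from H _ p rfl
  intro N
  induction N using Nat.strong_induction_on with
  | _ N ih =>
  intro p hN
  by_cases hp0 : p = 0
  · subst hp0; simp
  by_cases hroot : aeval α p = 0
  · obtain ⟨p₁, hp₁⟩ := minpoly.dvd K α hroot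
    have hq0 : minpoly K α ≠ 0 := minpoly.ne_zero hα
    have hp₁0 : p₁ ≠ 0 := by rintro rfl; rw [mul_zero] at hp₁; exact hp0 hp₁
    have hmap0 : p.map (algebraMap K ℂ) ≠ 0 := by
      simpa [Polynomial.map_eq_zero_iff hinj] using hp0
    have hsep : ((minpoly K α).map (algebraMap K ℂ)).Separable :=
      (PerfectField.separable_of_irreducible (minpoly.irreducible hα)).map
    have hrm1 : ∀ z : ℂ, aeval z (minpoly K α) = 0 →
        rootMultiplicity z ((minpoly K α).map (algebraMap K ℂ)) = 1 := by
      intro z hz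
      have hq0' : (minpoly K α).map (algebraMap K ℂ) ≠ 0 := by
        simpa [Polynomial.map_eq_zero_iff hinj] using hq0
      have hzroot : IsRoot ((minpoly K α).map (algebraMap K ℂ)) z := by
        rwa [IsRoot, eval_map, ← aeval_def]
      have h1 : 1 ≤ rootMultiplicity z ((minpoly K α).map (algebraMap K ℂ)) := by
        rw [← Polynomial.count_roots]
        exact Multiset.one_le_count_iff_mem.mpr ((mem_roots hq0').mpr hzroot)
      have h2 : rootMultiplicity z ((minpoly K α).map (algebraMap K ℂ)) ≤ 1 := by
        rw [← Polynomial.count_roots]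
        exact Multiset.nodup_iff_count_le_one.mp (nodup_roots hsep) z
      omega
    have hdeg : p₁.natDegree < N := by
      have h1 := minpoly.natDegree_pos hα
      have h2 : p.natDegree = (minpoly K α).natDegree + p₁.natDegree := by
        rw [hp₁, Polynomial.natDegree_mul hq0 hp₁0]
      omega
    have hmm : (minpoly K α).map (algebraMap K ℂ) * p₁.map (algebraMap K ℂ) ≠ 0 := by
      rw [← Polynomial.map_mul, ← hp₁]; exact hmap0
    rw [hp₁, Polynomial.map_mul, Polynomial.rootMultiplicity_mul hmm,
      Polynomial.rootMultiplicity_mul hmm,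
      hrm1 α (minpoly.aeval K α), hrm1 θ (by rw [hmp]; exact minpoly.aeval K θ),
      ih p₁.natDegree hdeg p₁ rfl]
  · have hroot' : aeval θ p ≠ 0 := fun h =>
      hroot (auxAevalZeroIff K hmp.symm hθ p h)
    rw [Polynomial.rootMultiplicity_eq_zero (by rwa [IsRoot, eval_map, ← aeval_def]),
      Polynomial.rootMultiplicity_eq_zero (by rwa [IsRoot, eval_map, ← aeval_def])]



lemma auxConjAeval (n : ℕ) (hn : 0 < n) (ζ : ℂ) (hζ1 : ζ ^ n = 1)
    {α θ : ℂ} {m : ℕ} (hm : 0 < m) (hα : IsPrimitiveRoot α m) (hθ : IsPrimitiveRoot θ m)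
    (hpow : θ ^ (m / Nat.gcd n m) = α ^ (m / Nat.gcd n m))
    (p : (IntermediateField.adjoin ℚ {ζ})[X])
    (hp : aeval α p = 0) : aeval θ p = 0 := by
  rcases eq_or_lt_of_le (Nat.one_le_iff_ne_zero.mpr hm.ne') with hm1 | hm2
  · have hα1 : α = 1 := by simpa [← hm1] using hα.pow_eq_one
    have hθ1 : θ = 1 := by simpa [← hm1] using hθ.pow_eq_one
    rwa [hθ1, ← hα1]
  haveI : NeZero m := ⟨hm.ne'⟩
  set d := Nat.gcd n m with hd
  set t := m / d with ht
  have hdpos : 0 < d := Nat.gcd_pos_of_pos_right _ hm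
  have htd : t * d = m := Nat.div_mul_cancel (Nat.gcd_dvd_right n m)
  have htpos : 0 < t :=
    Nat.div_pos (Nat.le_of_dvd hm (Nat.gcd_dvd_right n m)) hdpos
  -- θ = α ^ c with c coprime to m
  obtain ⟨c, hcm, hc⟩ := hα.eq_pow_of_pow_eq_one hθ.pow_eq_one
  have hccop : Nat.Coprime c m := (hα.pow_iff_coprime hm c).mp (hc ▸ hθ)
  -- c ≡ 1 mod d
  have hct : α ^ (c * t) = α ^ t := by
    rw [pow_mul, hc, hpow]
  have hdvd1 : (m : ℤ) ∣ (c * t : ℤ) - (t : ℤ) := by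
    have := (auxPowEqPow hm hα).mp hct
    simpa using this
  have hdc1 : (d : ℤ) ∣ (c : ℤ) - 1 := by
    have h1 : ((t : ℤ) * d) ∣ (t : ℤ) * ((c : ℤ) - 1) := by
      have : ((c : ℤ) * t) - t = (t : ℤ) * ((c : ℤ) - 1) := by ring
      rw [← this]
      exact_mod_cast (by exact_mod_cast htd ▸ hdvd1 : ((t * d : ℕ) : ℤ) ∣ _)
    exact (mul_dvd_mul_iff_left (by exact_mod_cast htpos.ne' : (t : ℤ) ≠ 0)).mp h1
  have hcrth : (1 : ℕ) ≡ c [MOD d] := by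
    rw [Nat.modEq_iff_dvd]
    simpa using hdc1
  -- CRT
  set L := Nat.lcm n m with hL
  have hLpos : 0 < L := Nat.pos_of_ne_zero (Nat.lcm_ne_zero hn.ne' hm.ne')
  haveI : NeZero L := ⟨hLpos.ne'⟩
  have hnL : n ∣ L := Nat.dvd_lcm_left n m
  have hmL : m ∣ L := Nat.dvd_lcm_right n m
  obtain ⟨b₀, hb₀n, hb₀m⟩ := Nat.chineseRemainder' hcrth
  set b := b₀ + L with hb
  have hbn : b ≡ 1 [MOD n] := by
    have : b₀ + L ≡ 1 + 0 [MOD n] :=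
      Nat.ModEq.add hb₀n ((Nat.modEq_zero_iff_dvd).mpr hnL)
    simpa using this
  have hbm : b ≡ c [MOD m] := by
    have : b₀ + L ≡ c + 0 [MOD m] :=
      Nat.ModEq.add hb₀m ((Nat.modEq_zero_iff_dvd).mpr hmL)
    simpa using this
  have hbpos : 1 ≤ b := by
    have := hLpos; omega
  -- coprimality of b with L
  have hbcn : Nat.Coprime b n := by
    have hdvd : n ∣ b - 1 := (Nat.modEq_iff_dvd' hbpos).mp hbn.symm
    have h1 : Nat.gcd b n ∣ 1 := by
      have g1 : Nat.gcd b n ∣ b - 1 := (Nat.gcd_dvd_right b n).trans hdvd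
      have g2 : Nat.gcd b n ∣ b := Nat.gcd_dvd_left b n
      have := Nat.dvd_sub g2 g1
      simpa [Nat.sub_sub_self hbpos] using this
    exact Nat.eq_one_of_dvd_one h1
  have hbcm : Nat.Coprime b m := by
    have hcb : c ≤ b := by
      have := hLpos
      have hmLle : m ≤ L := Nat.le_of_dvd hLpos hmL
      omega
    have hdvd : m ∣ b - c := (Nat.modEq_iff_dvd' hcb).mp hbm.symm
    have g1 : Nat.gcd b m ∣ b - c := (Nat.gcd_dvd_right b m).trans hdvd
    have g2 : Nat.gcd b m ∣ b := Nat.gcd_dvd_left b m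
    have g3 : Nat.gcd b m ∣ c := by
      have := Nat.dvd_sub g2 g1
      simpa [Nat.sub_sub_self hcb] using this
    have : Nat.gcd b m ∣ Nat.gcd c m := Nat.dvd_gcd g3 (Nat.gcd_dvd_right b m)
    rw [hccop] at this
    exact Nat.eq_one_of_dvd_one this
  have hbcL : Nat.Coprime b L := by
    refine Nat.Coprime.coprime_dvd_right ?_ (hbcn.mul_right hbcm)
    exact Nat.lcm_dvd (Dvd.intro m rfl) (Dvd.intro_left n rfl)
  -- θ = α ^ b
  have hαb : α ^ b = θ := by
    rw [← hc, auxPowEqPow hm hα]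
    have := (Nat.modEq_iff_dvd).mp hbm
    simpa using this.neg_right
  -- the big cyclotomic automorphism argument
  set ξ : ℂ := Complex.exp (2 * Real.pi * Complex.I / L) with hξdef
  have hξ : IsPrimitiveRoot ξ L := Complex.isPrimitiveRoot_exp L hLpos.ne'
  have hξint : IsIntegral ℚ ξ := by
    refine ⟨X ^ L - C 1, monic_X_pow_sub_C 1 hLpos.ne', ?_⟩
    simp [hξ.pow_eq_one]
  -- α and ζ are powers of ξ
  have hαL : α ^ L = 1 := (hα.pow_eq_one_iff_dvd L).mpr hmL
  obtain ⟨a, haL, haa⟩ := hξ.eq_pow_of_pow_eq_one hαL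
  have hζL : ζ ^ L = 1 := by
    obtain ⟨u, hu⟩ := hnL
    rw [hu, pow_mul, hζ1, one_pow]
  obtain ⟨a₀, ha₀L, ha₀⟩ := hξ.eq_pow_of_pow_eq_one hζL
  -- the algebra hom σ : ℚ⟮ξ⟯ →ₐ[ℚ] ℂ with σ ξ = ξ ^ b
  have hmem : ξ ^ b ∈ (minpoly ℚ ξ).aroots ℂ := by
    rw [← Polynomial.cyclotomic_eq_minpoly_rat hξ hLpos, aroots_def, Polynomial.map_cyclotomic]
    rw [Polynomial.mem_roots (Polynomial.cyclotomic_ne_zero L ℂ)]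
    exact (hξ.pow_of_coprime b hbcL).isRoot_cyclotomic hLpos
  set σ : ℚ⟮ξ⟯ →ₐ[ℚ] ℂ :=
    (IntermediateField.algHomAdjoinIntegralEquiv ℚ hξint).symm ⟨ξ ^ b, hmem⟩ with hσdef
  have hσgen : σ (AdjoinSimple.gen ℚ ξ) = ξ ^ b :=
    IntermediateField.algHomAdjoinIntegralEquiv_symm_apply_gen ℚ hξint _
  set ξ' : ℚ⟮ξ⟯ := AdjoinSimple.gen ℚ ξ with hξ'def
  have hξ'v : (ξ' : ℂ) = ξ := rfl
  -- σ fixes every element of E whose value lies in ℚ⟮ζ⟯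
  have hζb : ζ ^ b = ζ := by
    obtain ⟨k, hk⟩ : n ∣ b - 1 := (Nat.modEq_iff_dvd' hbpos).mp hbn.symm
    have hbeq : b = 1 + n * k := by omega
    rw [hbeq, pow_add, pow_mul, hζ1, one_pow, mul_one, pow_one]
  have hσζ : σ (ξ' ^ a₀) = ζ := by
    rw [map_pow, hσgen, ← pow_mul, mul_comm b a₀, pow_mul, ha₀, hζb]
  have hζmem : ζ ∈ ℚ⟮ξ⟯ := by
    rw [← ha₀]
    exact pow_mem (mem_adjoin_simple_self ℚ ξ) a₀
  have hζv : ((ξ' ^ a₀ : ℚ⟮ξ⟯) : ℂ) = ζ := by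
    push_cast [hξ'v]
    exact ha₀
  have hζint : IsIntegral ℚ ζ := by
    refine ⟨X ^ n - C 1, monic_X_pow_sub_C 1 hn.ne', ?_⟩
    simp [hζ1]
  have hfix : ∀ e : ℚ⟮ξ⟯, (e : ℂ) ∈ IntermediateField.adjoin ℚ {ζ} → σ e = (e : ℂ) := by
    intro e he
    have he' : (e : ℂ) ∈ Algebra.adjoin ℚ ({ζ} : Set ℂ) := by
      rw [← IntermediateField.adjoin_simple_toSubalgebra_of_isAlgebraic hζint.isAlgebraic]
      exact he
    rw [Algebra.adjoin_singleton_eq_range_aeval] at he'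
    obtain ⟨q, hq⟩ := he'
    have hvv : ((aeval (ξ' ^ a₀ : ℚ⟮ξ⟯) q : ℚ⟮ξ⟯) : ℂ) = aeval ζ q := by
      rw [← hζv]
      exact (Polynomial.aeval_algHom_apply (IntermediateField.val ℚ⟮ξ⟯)
        (ξ' ^ a₀) q).symm
    have heq : e = aeval (ξ' ^ a₀ : ℚ⟮ξ⟯) q := by
      apply Subtype.coe_injective
      show (e : ℂ) = ((aeval (ξ' ^ a₀ : ℚ⟮ξ⟯) q : ℚ⟮ξ⟯) : ℂ)
      rw [hvv]
      exact hq.symm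
    rw [heq, ← Polynomial.aeval_algHom_apply σ (ξ' ^ a₀) q, hσζ]
    exact hvv.symm
  -- now transport the vanishing
  have hKE : ∀ x : (IntermediateField.adjoin ℚ {ζ} : IntermediateField ℚ ℂ),
      (x : ℂ) ∈ ℚ⟮ξ⟯ := by
    intro x
    have hle : (IntermediateField.adjoin ℚ {ζ} : IntermediateField ℚ ℂ) ≤ ℚ⟮ξ⟯ := by
      apply IntermediateField.adjoin_le_iff.mpr
      intro y hy
      rcases hy with rfl
      exact hζmem
    exact hle x.2
  set Pc : ℂ[X] := p.map (algebraMap (IntermediateField.adjoin ℚ {ζ}) ℂ) with hPcdef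
  have hPclift : Pc ∈ Polynomial.lifts (algebraMap ℚ⟮ξ⟯ ℂ) := by
    rw [Polynomial.lifts_iff_coeff_lifts]
    intro i
    rw [Polynomial.coeff_map]
    exact ⟨⟨(p.coeff i : ℂ), hKE (p.coeff i)⟩, rfl⟩
  obtain ⟨PE, hPE⟩ := (Polynomial.mem_lifts _).mp hPclift
  set α' : ℚ⟮ξ⟯ := ξ' ^ a with hα'def
  have hα'v : (algebraMap ℚ⟮ξ⟯ ℂ) α' = α := by
    show ((α' : ℚ⟮ξ⟯) : ℂ) = α
    push_cast [hξ'v]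
    exact haa
  have hevalc : Pc.eval α = 0 := by
    rw [hPcdef, Polynomial.eval_map, ← Polynomial.aeval_def, hp]
  have hevalE : PE.eval α' = 0 := by
    apply (algebraMap ℚ⟮ξ⟯ ℂ).injective
    rw [map_zero, ← Polynomial.eval₂_at_apply, Polynomial.eval₂_eq_eval_map, hPE, hα'v, hevalc]
  have hmapσ : PE.map σ.toRingHom = Pc := by
    ext i
    rw [Polynomial.coeff_map]
    have hco : ((PE.coeff i : ℚ⟮ξ⟯) : ℂ) = Pc.coeff i := by
      rw [← hPE, Polynomial.coeff_map]; rfl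
    have hcoK : ((PE.coeff i : ℚ⟮ξ⟯) : ℂ) ∈ IntermediateField.adjoin ℚ {ζ} := by
      rw [hco, hPcdef, Polynomial.coeff_map]
      exact SetLike.coe_mem (p.coeff i)
    have := hfix (PE.coeff i) hcoK
    rw [AlgHom.toRingHom_eq_coe]
    exact this.trans hco
  have hσα' : σ α' = θ := by
    rw [hα'def, map_pow, hσgen, ← pow_mul, mul_comm b a, pow_mul, haa, hαb]
  have hfinal : Pc.eval θ = 0 := by
    have h2 : (PE.map σ.toRingHom).eval (σ.toRingHom α') = σ.toRingHom (PE.eval α') := by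
      rw [← Polynomial.eval₂_at_apply, Polynomial.eval₂_eq_eval_map]
    have h3 : σ.toRingHom α' = θ := hσα'
    rw [← hmapσ, ← h3, h2, hevalE, map_zero]
  rw [Polynomial.aeval_def, Polynomial.eval₂_eq_eval_map]
  exact hfinal



lemma auxMinpolyEq (n : ℕ) (hn : 0 < n) (ζ : ℂ) (hζ1 : ζ ^ n = 1)
    {α θ : ℂ} {m : ℕ} (hm : 0 < m) (hα : IsPrimitiveRoot α m) (hθ : IsPrimitiveRoot θ m)
    (hpow : θ ^ (m / Nat.gcd n m) = α ^ (m / Nat.gcd n m)) :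
    minpoly (IntermediateField.adjoin ℚ {ζ}) α
      = minpoly (IntermediateField.adjoin ℚ {ζ}) θ := by
  have hint : ∀ x : ℂ, x ^ m = 1 → IsIntegral (IntermediateField.adjoin ℚ {ζ}) x := by
    intro x hx
    exact ⟨X ^ m - C 1, monic_X_pow_sub_C 1 hm.ne', by simp [hx]⟩
  have hαint := hint α hα.pow_eq_one
  have hθint := hint θ hθ.pow_eq_one
  have h1 : minpoly (IntermediateField.adjoin ℚ {ζ}) θ ∣
      minpoly (IntermediateField.adjoin ℚ {ζ}) α :=
    minpoly.dvd _ _ (auxConjAeval n hn ζ hζ1 hm hα hθ hpow _ (minpoly.aeval _ _))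
  have h2 : minpoly (IntermediateField.adjoin ℚ {ζ}) α ∣
      minpoly (IntermediateField.adjoin ℚ {ζ}) θ :=
    minpoly.dvd _ _ (auxConjAeval n hn ζ hζ1 hm hθ hα hpow.symm _ (minpoly.aeval _ _))
  exact eq_of_monic_of_associated (minpoly.monic hαint) (minpoly.monic hθint)
    (associated_of_dvd_dvd h2 h1)



lemma auxGalStable (n : ℕ) (hn : 0 < n) (ζ : ℂ) (hζ1 : ζ ^ n = 1)
    (A : Polynomial ℂ) (hA : A.Monic)
    (hcoeff : ∀ k, A.coeff k ∈ IntermediateField.adjoin ℚ {ζ})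
    {α θ : ℂ} {m : ℕ} (hm : 0 < m) (hα : IsPrimitiveRoot α m) (hθ : IsPrimitiveRoot θ m)
    (hpow : θ ^ (m / Nat.gcd n m) = α ^ (m / Nat.gcd n m)) :
    A.roots.count θ = A.roots.count α := by
  classical
  set K : IntermediateField ℚ ℂ := IntermediateField.adjoin ℚ {ζ} with hK
  have hlift : A ∈ Polynomial.lifts (algebraMap K ℂ) := by
    rw [Polynomial.lifts_iff_coeff_lifts]
    intro i
    exact ⟨⟨A.coeff i, hcoeff i⟩, rfl⟩
  obtain ⟨A₀, hA₀⟩ := (Polynomial.mem_lifts _).mp hlift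
  have hint : ∀ x : ℂ, x ^ m = 1 → IsIntegral K x := by
    intro x hx
    exact ⟨X ^ m - C 1, monic_X_pow_sub_C 1 hm.ne', by simp [hx]⟩
  have hmp := auxMinpolyEq n hn ζ hζ1 hm hα hθ hpow
  have := auxRootMult K (hint α hα.pow_eq_one) (hint θ hθ.pow_eq_one) hmp A₀
  rw [hA₀] at this
  rw [Polynomial.count_roots, Polynomial.count_roots, this]



noncomputable def brsum (ζ : ℂ) (M : Multiset (ℕ × ℕ)) : Multiset ℂ :=
  (M.map fun p => Polynomial.nthRoots p.1 (ζ ^ p.2)).sum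

lemma brsum_add (ζ : ℂ) (M₁ M₂ : Multiset (ℕ × ℕ)) :
    brsum ζ (M₁ + M₂) = brsum ζ M₁ + brsum ζ M₂ := by
  simp [brsum]

lemma brsum_replicate (ζ : ℂ) (c : ℕ) (p : ℕ × ℕ) :
    brsum ζ (Multiset.replicate c p) = c • Polynomial.nthRoots p.1 (ζ ^ p.2) := by
  simp [brsum, Multiset.map_replicate, Multiset.sum_replicate]

lemma auxArith (m : ℕ) (hm : 0 < m) : m * 4 ^ (m / 2) < 4 ^ m := by
  have h4 : ∀ k : ℕ, (4:ℕ) ^ k = 2 ^ (2 * k) := by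
    intro k; rw [show (4:ℕ) = 2 ^ 2 from rfl, ← pow_mul]
  have hsplit : m = m / 2 + (m - m / 2) := by omega
  calc m * 4 ^ (m / 2) < 4 ^ (m - m / 2) * 4 ^ (m / 2) := by
        apply mul_lt_mul_of_pos_right _ (Nat.pow_pos (by norm_num))
        calc m < 2 ^ m := Nat.lt_two_pow_self
        _ ≤ 2 ^ (2 * (m - m / 2)) := Nat.pow_le_pow_right (by norm_num) (by omega)
        _ = 4 ^ (m - m / 2) := (h4 _).symm
    _ = 4 ^ m := by rw [← pow_add]; congr 1; omega

lemma auxKey (n : ℕ) (hn : 0 < n) (ζ : ℂ) (hζ : IsPrimitiveRoot ζ n) :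
    ∀ (ν : ℕ) (R : Multiset ℂ),
    ((R.map fun z => 4 ^ orderOf z).sum ≤ ν) →
    (∀ z ∈ R, ∃ m : ℕ, 0 < m ∧ IsPrimitiveRoot z m) →
    (∀ (m : ℕ) (α θ : ℂ), 0 < m → IsPrimitiveRoot α m → IsPrimitiveRoot θ m →
      θ ^ (m / Nat.gcd n m) = α ^ (m / Nat.gcd n m) → R.count θ = R.count α) →
    ∃ P N : Multiset (ℕ × ℕ),
      (∀ p ∈ P, 0 < p.1 ∧ 0 < p.2) ∧ (∀ p ∈ N, 0 < p.1 ∧ 0 < p.2) ∧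
      R + brsum ζ N = brsum ζ P := by
  classical
  intro ν
  induction ν with
  | zero =>
    intro R hμ h1 h2
    rcases Multiset.empty_or_exists_mem R with rfl | ⟨α, hαR⟩
    · exact ⟨0, 0, by simp, by simp, by simp [brsum]⟩
    · exfalso
      have hle : 4 ^ orderOf α ≤ (R.map fun z => 4 ^ orderOf z).sum :=
        Multiset.single_le_sum (fun x _ => Nat.zero_le x) _
          (Multiset.mem_map_of_mem _ hαR)
      have : 0 < 4 ^ orderOf α := Nat.pow_pos (by norm_num)
      omega
  | succ ν ih =>
    intro R hμ h1 h2
    rcases Multiset.empty_or_exists_mem R with rfl | ⟨α, hαR⟩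
    · exact ⟨0, 0, by simp, by simp, by simp [brsum]⟩
    obtain ⟨m, hm, hα⟩ := h1 α hαR
    have hordα : orderOf α = m := hα.eq_orderOf.symm
    set d := Nat.gcd n m with hd
    have hdpos : 0 < d := Nat.gcd_pos_of_pos_right _ hm
    set t := m / d with ht
    have htd : t * d = m := Nat.div_mul_cancel (Nat.gcd_dvd_right n m)
    have htpos : 0 < t := Nat.div_pos (Nat.le_of_dvd hm (Nat.gcd_dvd_right n m)) hdpos
    have htm : t ≤ m := Nat.div_le_self m d
    set η := α ^ t with hη
    have hηd : η ^ d = 1 := by rw [hη, ← pow_mul, htd, hα.pow_eq_one]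
    have hηn : η ^ n = 1 := by
      obtain ⟨u, hu⟩ := Nat.gcd_dvd_left n m
      rw [hu, pow_mul, hηd, one_pow]
    have hη0 : η ≠ 0 := by
      intro h0
      rw [h0, zero_pow hn.ne'] at hηn
      exact zero_ne_one hηn
    -- find r with ζ ^ r = η, 0 < r
    haveI : NeZero n := ⟨hn.ne'⟩
    obtain ⟨r₀, hr₀n, hr₀⟩ := hζ.eq_pow_of_pow_eq_one hηn
    set r := if r₀ = 0 then n else r₀ with hr
    have hrpos : 0 < r := by
      rw [hr]; split <;> omega
    have hζr : ζ ^ r = η := by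
      rw [hr]; split
      · rename_i h0
        rw [hζ.pow_eq_one, ← hr₀, h0, pow_zero]
      · exact hr₀
    -- binomial root set
    set Sb := Polynomial.nthRoots t η with hSb
    have hmemSb : ∀ x : ℂ, x ∈ Sb ↔ x ^ t = η := fun x =>
      Polynomial.mem_nthRoots htpos
    have hnodupSb : Sb.Nodup := by
      apply Polynomial.nodup_roots
      exact Polynomial.separable_X_pow_sub_C η
        (by exact_mod_cast Nat.cast_ne_zero.mpr htpos.ne') hη0
    have hSbpow : ∀ x ∈ Sb, x ^ m = 1 := by
      intro x hx
      rw [← htd, pow_mul, (hmemSb x).mp hx, hηd]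
    have hSbfin : ∀ x ∈ Sb, 0 < orderOf x ∧ IsPrimitiveRoot x (orderOf x) ∧ orderOf x ∣ m := by
      intro x hx
      have hfin : IsOfFinOrder x := isOfFinOrder_iff_pow_eq_one.mpr ⟨m, hm, hSbpow x hx⟩
      refine ⟨hfin.orderOf_pos, ⟨pow_orderOf_eq_one x, fun l hl => orderOf_dvd_of_pow_eq_one hl⟩,
        orderOf_dvd_of_pow_eq_one (hSbpow x hx)⟩
    set O := Sb.filter (fun x => orderOf x = m) with hO
    set Low := Sb.filter (fun x => ¬ orderOf x = m) with hLow
    have hOL : O + Low = Sb := Multiset.filter_add_not _ _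
    have hαSb : α ∈ Sb := (hmemSb α).mpr rfl
    have hαO : α ∈ O := Multiset.mem_filter.mpr ⟨hαSb, hordα⟩
    set c := R.count α with hc
    have hc1 : 1 ≤ c := Multiset.one_le_count_iff_mem.mpr hαR
    -- all elements of O have R-count c
    have hOcount : ∀ x ∈ O, R.count x = c := by
      intro x hx
      obtain ⟨hxSb, hxord⟩ := Multiset.mem_filter.mp hx
      obtain ⟨_, hxprim, _⟩ := hSbfin x hxSb
      rw [hxord] at hxprim
      exact h2 m α x hm hα hxprim (by rw [(hmemSb x).mp hxSb])
    have hsub : c • O ≤ R := by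
      rw [Multiset.le_iff_count]
      intro x
      rw [Multiset.count_nsmul]
      by_cases hx : x ∈ O
      · rw [Multiset.count_eq_one_of_mem (hnodupSb.filter _) hx, mul_one, hOcount x hx]
      · rw [Multiset.count_eq_zero_of_notMem hx, mul_zero]
        exact Nat.zero_le _
    set R₀ := R - c • O with hR₀
    have hR0 : R₀ + c • O = R := tsub_add_cancel_of_le hsub
    set R'' := R₀ + c • Low with hR''
    -- transfer of membership along the relation
    have hSbtrans : ∀ (m₁ : ℕ) (x y : ℂ), 0 < m₁ → IsPrimitiveRoot x m₁ →
        IsPrimitiveRoot y m₁ → y ^ (m₁ / Nat.gcd n m₁) = x ^ (m₁ / Nat.gcd n m₁) →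
        x ∈ Sb → y ∈ Sb := by
      intro m₁ x y hm₁ hx hy hxy hxSb
      have hxord : orderOf x = m₁ := hx.eq_orderOf.symm
      have hm₁m : m₁ ∣ m := by
        have := (hSbfin x hxSb).2.2
        rwa [hxord] at this
      have ht₁ : (m₁ / Nat.gcd n m₁) ∣ t := by
        rw [ht, hd]
        exact auxTdvd n m₁ m hm₁m
      obtain ⟨w, hw⟩ := ht₁
      rw [hmemSb]
      rw [hw, pow_mul, hxy, ← pow_mul, ← hw]
      exact (hmemSb x).mp hxSb
    have hOtrans : ∀ (m₁ : ℕ) (x y : ℂ), 0 < m₁ → IsPrimitiveRoot x m₁ →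
        IsPrimitiveRoot y m₁ → y ^ (m₁ / Nat.gcd n m₁) = x ^ (m₁ / Nat.gcd n m₁) →
        x ∈ O → y ∈ O := by
      intro m₁ x y hm₁ hx hy hxy hxO
      obtain ⟨hxSb, hxord⟩ := Multiset.mem_filter.mp hxO
      have hyord : orderOf y = m₁ := hy.eq_orderOf.symm
      have hxord' : orderOf x = m₁ := hx.eq_orderOf.symm
      refine Multiset.mem_filter.mpr ⟨hSbtrans m₁ x y hm₁ hx hy hxy hxSb, ?_⟩
      rw [hyord, ← hxord', hxord]
    -- count equalities for the relation, for Sb, O, Low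
    have hcnt : ∀ (m₁ : ℕ) (x y : ℂ), 0 < m₁ → IsPrimitiveRoot x m₁ →
        IsPrimitiveRoot y m₁ → y ^ (m₁ / Nat.gcd n m₁) = x ^ (m₁ / Nat.gcd n m₁) →
        (Sb.count y = Sb.count x ∧ O.count y = O.count x ∧ Low.count y = Low.count x) := by
      intro m₁ x y hm₁ hx hy hxy
      have hSbiff : x ∈ Sb ↔ y ∈ Sb :=
        ⟨hSbtrans m₁ x y hm₁ hx hy hxy, hSbtrans m₁ y x hm₁ hy hx hxy.symm⟩
      have hOiff : x ∈ O ↔ y ∈ O :=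
        ⟨hOtrans m₁ x y hm₁ hx hy hxy, hOtrans m₁ y x hm₁ hy hx hxy.symm⟩
      have hnodupO : O.Nodup := hnodupSb.filter _
      have hnodupLow : Low.Nodup := hnodupSb.filter _
      have hLowiff : x ∈ Low ↔ y ∈ Low := by
        rw [hLow, Multiset.mem_filter, Multiset.mem_filter, ← hSbiff,
          hx.eq_orderOf.symm.trans hy.eq_orderOf]
      constructor
      · by_cases hxx : x ∈ Sb
        · rw [Multiset.count_eq_one_of_mem hnodupSb hxx,
            Multiset.count_eq_one_of_mem hnodupSb (hSbiff.mp hxx)]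
        · rw [Multiset.count_eq_zero_of_notMem hxx,
            Multiset.count_eq_zero_of_notMem (fun h => hxx (hSbiff.mpr h))]
      constructor
      · by_cases hxx : x ∈ O
        · rw [Multiset.count_eq_one_of_mem hnodupO hxx,
            Multiset.count_eq_one_of_mem hnodupO (hOiff.mp hxx)]
        · rw [Multiset.count_eq_zero_of_notMem hxx,
            Multiset.count_eq_zero_of_notMem (fun h => hxx (hOiff.mpr h))]
      · by_cases hxx : x ∈ Low
        · rw [Multiset.count_eq_one_of_mem hnodupLow hxx,
            Multiset.count_eq_one_of_mem hnodupLow (hLowiff.mp hxx)]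
        · rw [Multiset.count_eq_zero_of_notMem hxx,
            Multiset.count_eq_zero_of_notMem (fun h => hxx (hLowiff.mpr h))]
    -- the measure
    set μ : Multiset ℂ → ℕ := fun S => (S.map fun z => 4 ^ orderOf z).sum with hμdef
    have hμadd : ∀ S₁ S₂ : Multiset ℂ, μ (S₁ + S₂) = μ S₁ + μ S₂ := by
      intro S₁ S₂; simp [hμdef]
    have hμsmul : ∀ (k : ℕ) (S : Multiset ℂ), μ (k • S) = k * μ S := by
      intro k S; simp [hμdef, Multiset.map_nsmul, Multiset.sum_nsmul, smul_eq_mul]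
    have hμO : μ O = O.card * 4 ^ m := by
      have h : O.map (fun z => 4 ^ orderOf z) = O.map (fun _ => 4 ^ m) := by
        apply Multiset.map_congr rfl
        intro x hx
        rw [(Multiset.mem_filter.mp hx).2]
      show (O.map (fun z => 4 ^ orderOf z)).sum = _
      rw [h, Multiset.map_const', Multiset.sum_replicate, smul_eq_mul]
    have hμLow : μ Low ≤ m * 4 ^ (m / 2) := by
      have hbound : ∀ v ∈ Low.map (fun z => 4 ^ orderOf z), v ≤ 4 ^ (m / 2) := by
        intro v hv
        obtain ⟨x, hx, rfl⟩ := Multiset.mem_map.mp hv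
        obtain ⟨hxSb, hxord⟩ := Multiset.mem_filter.mp hx
        obtain ⟨hxpos, _, hxdvd⟩ := hSbfin x hxSb
        have : orderOf x ≤ m / 2 := by
          obtain ⟨w, hw⟩ := hxdvd
          have hw2 : 2 ≤ w := by
            rcases Nat.lt_or_ge w 2 with h | h
            · interval_cases w
              · omega
              · simp at hw; omega
            · exact h
          have : orderOf x * 2 ≤ m := by
            calc orderOf x * 2 ≤ orderOf x * w := Nat.mul_le_mul_left _ hw2
            _ = m := hw.symm
          omega
        exact Nat.pow_le_pow_right (by norm_num) this
      have hcardLow : Low.card ≤ m := by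
        have h1 : Low.card ≤ Sb.card := by
          rw [← hOL, Multiset.card_add]; omega
        have h2 : Sb.card ≤ t := by
          rw [hSb]
          have := Polynomial.card_roots' (X ^ t - C η)
          calc (Polynomial.nthRoots t η).card
              ≤ (X ^ t - C η).natDegree := this
            _ = t := Polynomial.natDegree_X_pow_sub_C
        omega
      calc μ Low ≤ (Low.map (fun z => 4 ^ orderOf z)).card • 4 ^ (m / 2) :=
            Multiset.sum_le_card_nsmul _ _ hbound
        _ = Low.card * 4 ^ (m / 2) := by rw [Multiset.card_map, smul_eq_mul]
        _ ≤ m * 4 ^ (m / 2) := Nat.mul_le_mul_right _ hcardLow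
    have hμstrict : μ (c • Low) < μ (c • O) := by
      rw [hμsmul, hμsmul, hμO]
      have hOcard : 1 ≤ O.card := by
        have := Multiset.card_pos_iff_exists_mem.mpr ⟨α, hαO⟩
        omega
      calc c * μ Low ≤ c * (m * 4 ^ (m / 2)) := Nat.mul_le_mul_left _ hμLow
        _ < c * 4 ^ m := mul_lt_mul_of_pos_left (auxArith m hm) (by omega)
        _ ≤ c * (O.card * 4 ^ m) := by
            apply Nat.mul_le_mul_left
            calc 4 ^ m = 1 * 4 ^ m := (one_mul _).symm
              _ ≤ O.card * 4 ^ m := Nat.mul_le_mul_right _ hOcard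
    have hμR'' : μ R'' ≤ ν := by
      have h0 : μ R ≤ ν + 1 := hμ
      have hμR : μ R = μ R₀ + μ (c • O) := by rw [← hR0, hμadd]
      have hx : μ R'' = μ R₀ + μ (c • Low) := by rw [hR'', hμadd]
      omega
    have hμcLow : μ (c • Low) ≤ ν := by
      have h0 : μ R ≤ ν + 1 := hμ
      have hμR : μ R = μ R₀ + μ (c • O) := by rw [← hR0, hμadd]
      omega
    -- hypotheses h1 h2 for R'' and c • Low
    have h1Low : ∀ z ∈ Low, ∃ m' : ℕ, 0 < m' ∧ IsPrimitiveRoot z m' := by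
      intro z hz
      obtain ⟨hzpos, hzprim, _⟩ := hSbfin z (Multiset.mem_filter.mp hz).1
      exact ⟨orderOf z, hzpos, hzprim⟩
    have hmemsm : ∀ z, z ∈ c • Low → z ∈ Low := by
      intro z hz
      have hc0 : c ≠ 0 := by omega
      exact (Multiset.mem_nsmul.mp hz).2
    have h1R'' : ∀ z ∈ R'', ∃ m' : ℕ, 0 < m' ∧ IsPrimitiveRoot z m' := by
      intro z hz
      rw [hR''] at hz
      rcases Multiset.mem_add.mp hz with hz | hz
      · exact h1 z (Multiset.mem_of_le tsub_le_self hz)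
      · exact h1Low z (hmemsm z hz)
    have h2R'' : ∀ (m₁ : ℕ) (x y : ℂ), 0 < m₁ → IsPrimitiveRoot x m₁ → IsPrimitiveRoot y m₁ →
        y ^ (m₁ / Nat.gcd n m₁) = x ^ (m₁ / Nat.gcd n m₁) → R''.count y = R''.count x := by
      intro m₁ x y hm₁ hx hy hxy
      obtain ⟨hcS, hcO, hcL⟩ := hcnt m₁ x y hm₁ hx hy hxy
      have hcR := h2 m₁ x y hm₁ hx hy hxy
      rw [hR'', Multiset.count_add, Multiset.count_add, hR₀, Multiset.count_sub,
        Multiset.count_sub, Multiset.count_nsmul, Multiset.count_nsmul,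
        Multiset.count_nsmul, Multiset.count_nsmul, hcR, hcO, hcL]
    have h2cLow : ∀ (m₁ : ℕ) (x y : ℂ), 0 < m₁ → IsPrimitiveRoot x m₁ → IsPrimitiveRoot y m₁ →
        y ^ (m₁ / Nat.gcd n m₁) = x ^ (m₁ / Nat.gcd n m₁) →
        (c • Low).count y = (c • Low).count x := by
      intro m₁ x y hm₁ hx hy hxy
      obtain ⟨hcS, hcO, hcL⟩ := hcnt m₁ x y hm₁ hx hy hxy
      rw [Multiset.count_nsmul, Multiset.count_nsmul, hcL]
    have h1cLow : ∀ z ∈ c • Low, ∃ m' : ℕ, 0 < m' ∧ IsPrimitiveRoot z m' :=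
      fun z hz => h1Low z (hmemsm z hz)
    obtain ⟨P₁, N₁, hP₁pos, hN₁pos, hEq₁⟩ := ih R'' hμR'' h1R'' h2R''
    obtain ⟨P₂, N₂, hP₂pos, hN₂pos, hEq₂⟩ := ih (c • Low) hμcLow h1cLow h2cLow
    refine ⟨Multiset.replicate c (t, r) + P₁ + N₂ + N₂, N₁ + P₂ + P₂, ?_, ?_, ?_⟩
    · intro p hp
      simp only [Multiset.mem_add] at hp
      rcases hp with ((hp | hp) | hp) | hp
      · rw [Multiset.eq_of_mem_replicate hp]
        exact ⟨htpos, hrpos⟩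
      · exact hP₁pos p hp
      · exact hN₂pos p hp
      · exact hN₂pos p hp
    · intro p hp
      simp only [Multiset.mem_add] at hp
      rcases hp with (hp | hp) | hp
      · exact hN₁pos p hp
      · exact hP₂pos p hp
      · exact hP₂pos p hp
    · ext a
      have e1 := congrArg (Multiset.count a) hEq₁
      have e2 := congrArg (Multiset.count a) hEq₂
      have e0 := congrArg (Multiset.count a) hR0
      have e3 := congrArg (Multiset.count a) hOL
      have e4 := congrArg (Multiset.count a) (brsum_replicate ζ c (t, r))
      rw [show ζ ^ (t, r).2 = η from hζr] at e4
      rw [show (t, r).1 = t from rfl] at e4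
      rw [← hSb] at e4
      simp only [brsum_add, Multiset.count_add, Multiset.count_nsmul, hR''] at e1 e2 e0 e3 e4 ⊢
      have e5 : c * Multiset.count a O + c * Multiset.count a Low = c * Multiset.count a Sb := by
        rw [← Nat.left_distrib, e3]
      omega



lemma auxOfFnProd {M : Type*} [CommMonoid M] (xs : List (ℕ × ℕ)) (f : ℕ × ℕ → M) :
    (∏ i : Fin xs.length, f (xs[(i : ℕ)])) = (xs.map f).prod := by
  have h1 : xs.map f = List.ofFn (fun i : Fin xs.length => f (xs[(i : ℕ)])) := by
    conv_lhs => rw [← List.ofFn_getElem (xs := xs)]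
    rw [List.map_ofFn]
    rfl
  rw [h1, List.prod_ofFn]

lemma auxFilterLt (lx ly : ℕ) :
    Finset.univ.filter (fun j : Fin (lx + ly) => (j : ℕ) < lx) =
      Finset.map (Fin.castAddEmb ly) Finset.univ := by
  ext j
  simp only [Finset.mem_filter, Finset.mem_univ, true_and, Finset.mem_map]
  constructor
  · intro hj
    exact ⟨⟨(j : ℕ), hj⟩, by ext; rfl⟩
  · rintro ⟨i, rfl⟩
    exact i.2
lemma auxFilterGe (lx ly : ℕ) :
    Finset.univ.filter (fun j : Fin (lx + ly) => lx ≤ (j : ℕ)) =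
      Finset.map (Fin.natAddEmb lx) Finset.univ := by
  ext j
  simp only [Finset.mem_filter, Finset.mem_univ, true_and, Finset.mem_map]
  constructor
  · intro hj
    refine ⟨⟨(j : ℕ) - lx, by omega⟩, by ext; simp [Fin.natAddEmb_apply]; omega⟩
  · rintro ⟨i, rfl⟩
    simp [Fin.natAddEmb_apply]

lemma auxListProdLeft {M : Type*} [CommMonoid M] (xs ys : List (ℕ × ℕ)) (f : ℕ × ℕ → M) :
    (∏ j ∈ Finset.univ.filter (fun j : Fin (xs.length + ys.length) => (j : ℕ) < xs.length),
        f ((xs ++ ys)[(j : ℕ)]'(by rw [List.length_append]; exact j.2))) = (xs.map f).prod := by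
  rw [auxFilterLt, Finset.prod_map]
  rw [← auxOfFnProd xs f]
  apply Finset.prod_congr rfl
  intro i _
  congr 1
  have : ((Fin.castAddEmb ys.length i : Fin (xs.length + ys.length)) : ℕ) = (i : ℕ) := rfl
  simp only [this]
  exact List.getElem_append_left i.2

lemma auxListProdRight {M : Type*} [CommMonoid M] (xs ys : List (ℕ × ℕ)) (f : ℕ × ℕ → M) :
    (∏ j ∈ Finset.univ.filter (fun j : Fin (xs.length + ys.length) => xs.length ≤ (j : ℕ)),
        f ((xs ++ ys)[(j : ℕ)]'(by rw [List.length_append]; exact j.2))) = (ys.map f).prod := by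
  rw [auxFilterGe, Finset.prod_map]
  rw [← auxOfFnProd ys f]
  apply Finset.prod_congr rfl
  intro i _
  congr 1
  have h : ((Fin.natAddEmb xs.length i : Fin (xs.length + ys.length)) : ℕ) = xs.length + (i : ℕ) := rfl
  simp only [h]
  rw [List.getElem_append_right (by omega)]
  congr 1
  omega

theorem stmt_14 (n : ℕ) (hn : 0 < n)
    (ζ : ℂ) (hζ : ζ = Complex.exp (2 * Real.pi * Complex.I / n))
    (A : Polynomial ℂ) (hA : A.Monic)
    (hcoeff : ∀ k, A.coeff k ∈ IntermediateField.adjoin ℚ {ζ})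
    (hroots : ∀ z : ℂ, A.IsRoot z → ∃ m : ℕ, 0 < m ∧ z ^ m = 1) :
    ∃ (l l' : ℕ), 0 < l ∧
      ∃ k r : Fin (l + l') → ℕ,
        (∀ j, 0 < k j) ∧ (∀ j, 0 < r j) ∧
        A * (∏ j ∈ Finset.univ.filter fun j : Fin (l + l') => l ≤ (j : ℕ),
              (X ^ k j - C (ζ ^ r j))) =
          (∏ j ∈ Finset.univ.filter fun j : Fin (l + l') => (j : ℕ) < l,
              (X ^ k j - C (ζ ^ r j))) ∧
        (∑ j ∈ Finset.univ.filter fun j : Fin (l + l') => (j : ℕ) < l, (k j : ℤ)) -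
            (∑ j ∈ Finset.univ.filter fun j : Fin (l + l') => l ≤ (j : ℕ), (k j : ℤ)) =
          (A.natDegree : ℤ) ∧
        Finset.univ.gcd k = 1 := by
  classical
  have hζprim : IsPrimitiveRoot ζ n := by
    rw [hζ]; exact Complex.isPrimitiveRoot_exp n hn.ne'
  have hζ1 : ζ ^ n = 1 := hζprim.pow_eq_one
  have hA0 : A ≠ 0 := hA.ne_zero
  have h1 : ∀ z ∈ A.roots, ∃ m : ℕ, 0 < m ∧ IsPrimitiveRoot z m := by
    intro z hz
    obtain ⟨m, hm, hzm⟩ := hroots z ((Polynomial.mem_roots hA0).mp hz)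
    have hfin : IsOfFinOrder z := isOfFinOrder_iff_pow_eq_one.mpr ⟨m, hm, hzm⟩
    exact ⟨orderOf z, hfin.orderOf_pos,
      ⟨pow_orderOf_eq_one z, fun l hl => orderOf_dvd_of_pow_eq_one hl⟩⟩
  have h2 : ∀ (m : ℕ) (x y : ℂ), 0 < m → IsPrimitiveRoot x m → IsPrimitiveRoot y m →
      y ^ (m / Nat.gcd n m) = x ^ (m / Nat.gcd n m) →
      A.roots.count y = A.roots.count x := by
    intro m x y hm hx hy hxy
    exact auxGalStable n hn ζ hζ1 A hA hcoeff hm hx hy hxy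
  obtain ⟨P, N, hPpos, hNpos, hEq⟩ :=
    auxKey n hn ζ hζprim ((A.roots.map fun z => 4 ^ orderOf z).sum) A.roots le_rfl h1 h2
  set P' : Multiset (ℕ × ℕ) := (1, n) ::ₘ P with hP'
  set N' : Multiset (ℕ × ℕ) := (1, n) ::ₘ N with hN'
  have hP'pos : ∀ p ∈ P', 0 < p.1 ∧ 0 < p.2 := by
    intro p hp
    rcases Multiset.mem_cons.mp hp with rfl | hp
    · exact ⟨one_pos, hn⟩
    · exact hPpos p hp
  have hN'pos : ∀ p ∈ N', 0 < p.1 ∧ 0 < p.2 := by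
    intro p hp
    rcases Multiset.mem_cons.mp hp with rfl | hp
    · exact ⟨one_pos, hn⟩
    · exact hNpos p hp
  have hEq' : A.roots + brsum ζ N' = brsum ζ P' := by
    have hbr : ∀ M : Multiset (ℕ × ℕ), brsum ζ ((1, n) ::ₘ M) =
        Polynomial.nthRoots 1 (ζ ^ n) + brsum ζ M := by
      intro M
      simp [brsum, Multiset.map_cons, Multiset.sum_cons]
    rw [hbr, hbr, ← hEq]
    rw [add_left_comm]
  set F : ℕ × ℕ → Polynomial ℂ := fun p => X ^ p.1 - C (ζ ^ p.2) with hF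
  have hprodmon : ∀ (M : Multiset (ℕ × ℕ)), (∀ p ∈ M, 0 < p.1 ∧ 0 < p.2) →
      ((M.map F).prod).Monic := by
    intro M hM
    exact Polynomial.monic_multiset_prod_of_monic M F
      (fun p hp => monic_X_pow_sub_C _ (hM p hp).1.ne')
  have hbrroots : ∀ (M : Multiset (ℕ × ℕ)), (∀ p ∈ M, 0 < p.1 ∧ 0 < p.2) →
      ((M.map F).prod).roots = brsum ζ M := by
    intro M hM
    rw [Polynomial.roots_multiset_prod]
    · show ((M.map F).map Polynomial.roots).sum = _
      rw [Multiset.map_map]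
      rfl
    · intro h0
      obtain ⟨p, hp, h0'⟩ := Multiset.mem_map.mp h0
      have : F p ≠ 0 := (monic_X_pow_sub_C (ζ ^ p.2) (hM p hp).1.ne').ne_zero
      exact this h0'
  have hmain : A * ((N'.map F).prod) = (P'.map F).prod := by
    have hLm : (A * (N'.map F).prod).Monic := hA.mul (hprodmon N' hN'pos)
    have hRm : ((P'.map F).prod).Monic := hprodmon P' hP'pos
    have hrootsEq : (A * (N'.map F).prod).roots = ((P'.map F).prod).roots := by
      rw [Polynomial.roots_mul (mul_ne_zero hA0 (hprodmon N' hN'pos).ne_zero),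
        hbrroots N' hN'pos, hbrroots P' hP'pos]
      exact hEq'
    calc A * (N'.map F).prod
        = ((A * (N'.map F).prod).roots.map fun a => X - C a).prod :=
          (IsAlgClosed.splits _).eq_prod_roots_of_monic hLm
      _ = (((P'.map F).prod).roots.map fun a => X - C a).prod := by rw [hrootsEq]
      _ = (P'.map F).prod :=
          ((IsAlgClosed.splits _).eq_prod_roots_of_monic hRm).symm
  -- packaging into lists
  have hlen : ∀ j : Fin (P'.toList.length + N'.toList.length),
      (j : ℕ) < (P'.toList ++ N'.toList).length := by
    intro j; rw [List.length_append]; exact j.2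
  have hlpos : 0 < P'.toList.length := by
    rw [Multiset.length_toList, hP', Multiset.card_cons]
    omega
  have hkpos : ∀ j : Fin (P'.toList.length + N'.toList.length),
      0 < ((P'.toList ++ N'.toList)[(j : ℕ)]'(hlen j)).1 ∧
      0 < ((P'.toList ++ N'.toList)[(j : ℕ)]'(hlen j)).2 := by
    intro j
    have hmem := List.getElem_mem (hlen j)
    rcases List.mem_append.mp hmem with hm | hm
    · exact hP'pos _ (Multiset.mem_toList.mp hm)
    · exact hN'pos _ (Multiset.mem_toList.mp hm)
  have hlistN : (N'.toList.map F).prod = (N'.map F).prod := by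
    rw [← Multiset.prod_coe, ← Multiset.map_coe, Multiset.coe_toList]
  have hlistP : (P'.toList.map F).prod = (P'.map F).prod := by
    rw [← Multiset.prod_coe, ← Multiset.map_coe, Multiset.coe_toList]
  have hprodeq : A * (∏ j ∈ Finset.univ.filter
        (fun j : Fin (P'.toList.length + N'.toList.length) => P'.toList.length ≤ (j : ℕ)),
        (X ^ ((P'.toList ++ N'.toList)[(j : ℕ)]'(hlen j)).1
          - C (ζ ^ ((P'.toList ++ N'.toList)[(j : ℕ)]'(hlen j)).2)))
      = (∏ j ∈ Finset.univ.filter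
        (fun j : Fin (P'.toList.length + N'.toList.length) => (j : ℕ) < P'.toList.length),
        (X ^ ((P'.toList ++ N'.toList)[(j : ℕ)]'(hlen j)).1
          - C (ζ ^ ((P'.toList ++ N'.toList)[(j : ℕ)]'(hlen j)).2))) := by
    have e1 : (∏ j ∈ Finset.univ.filter
          (fun j : Fin (P'.toList.length + N'.toList.length) => P'.toList.length ≤ (j : ℕ)),
          (X ^ ((P'.toList ++ N'.toList)[(j : ℕ)]'(hlen j)).1
            - C (ζ ^ ((P'.toList ++ N'.toList)[(j : ℕ)]'(hlen j)).2)))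
        = (N'.toList.map F).prod := by
      rw [← auxListProdRight P'.toList N'.toList F]
    have e2 : (∏ j ∈ Finset.univ.filter
          (fun j : Fin (P'.toList.length + N'.toList.length) => (j : ℕ) < P'.toList.length),
          (X ^ ((P'.toList ++ N'.toList)[(j : ℕ)]'(hlen j)).1
            - C (ζ ^ ((P'.toList ++ N'.toList)[(j : ℕ)]'(hlen j)).2)))
        = (P'.toList.map F).prod := by
      rw [← auxListProdLeft P'.toList N'.toList F]
    rw [e1, e2, hlistN, hlistP]
    exact hmain
  have hdeg : (∑ j ∈ Finset.univ.filter
        (fun j : Fin (P'.toList.length + N'.toList.length) => (j : ℕ) < P'.toList.length),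
        ((((P'.toList ++ N'.toList)[(j : ℕ)]'(hlen j)).1 : ℤ))) -
      (∑ j ∈ Finset.univ.filter
        (fun j : Fin (P'.toList.length + N'.toList.length) => P'.toList.length ≤ (j : ℕ)),
        ((((P'.toList ++ N'.toList)[(j : ℕ)]'(hlen j)).1 : ℤ)))
      = (A.natDegree : ℤ) := by
    have hdP : (∏ j ∈ Finset.univ.filter
          (fun j : Fin (P'.toList.length + N'.toList.length) => (j : ℕ) < P'.toList.length),
          (X ^ ((P'.toList ++ N'.toList)[(j : ℕ)]'(hlen j)).1
            - C (ζ ^ ((P'.toList ++ N'.toList)[(j : ℕ)]'(hlen j)).2))).natDegree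
        = ∑ j ∈ Finset.univ.filter
          (fun j : Fin (P'.toList.length + N'.toList.length) => (j : ℕ) < P'.toList.length),
          ((P'.toList ++ N'.toList)[(j : ℕ)]'(hlen j)).1 := by
      rw [Polynomial.natDegree_prod _ _
        (fun j _ => (monic_X_pow_sub_C _ (hkpos j).1.ne').ne_zero)]
      exact Finset.sum_congr rfl (fun j _ => natDegree_X_pow_sub_C)
    have hdN : (∏ j ∈ Finset.univ.filter
          (fun j : Fin (P'.toList.length + N'.toList.length) => P'.toList.length ≤ (j : ℕ)),
          (X ^ ((P'.toList ++ N'.toList)[(j : ℕ)]'(hlen j)).1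
            - C (ζ ^ ((P'.toList ++ N'.toList)[(j : ℕ)]'(hlen j)).2))).natDegree
        = ∑ j ∈ Finset.univ.filter
          (fun j : Fin (P'.toList.length + N'.toList.length) => P'.toList.length ≤ (j : ℕ)),
          ((P'.toList ++ N'.toList)[(j : ℕ)]'(hlen j)).1 := by
      rw [Polynomial.natDegree_prod _ _
        (fun j _ => (monic_X_pow_sub_C _ (hkpos j).1.ne').ne_zero)]
      exact Finset.sum_congr rfl (fun j _ => natDegree_X_pow_sub_C)
    have hne : (∏ j ∈ Finset.univ.filter
          (fun j : Fin (P'.toList.length + N'.toList.length) => P'.toList.length ≤ (j : ℕ)),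
          (X ^ ((P'.toList ++ N'.toList)[(j : ℕ)]'(hlen j)).1
            - C (ζ ^ ((P'.toList ++ N'.toList)[(j : ℕ)]'(hlen j)).2))) ≠ 0 :=
      Finset.prod_ne_zero_iff.mpr
        (fun j _ => (monic_X_pow_sub_C _ (hkpos j).1.ne').ne_zero)
    have hnatdeg := congrArg Polynomial.natDegree hprodeq
    rw [Polynomial.natDegree_mul hA0 hne, hdP, hdN] at hnatdeg
    rw [← Nat.cast_sum, ← Nat.cast_sum]
    omega
  have hgcd : Finset.univ.gcd (fun j : Fin (P'.toList.length + N'.toList.length) =>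
      ((P'.toList ++ N'.toList)[(j : ℕ)]'(hlen j)).1) = 1 := by
    have h1n : ((1 : ℕ), n) ∈ P'.toList :=
      Multiset.mem_toList.mpr (Multiset.mem_cons_self _ _)
    obtain ⟨i, hi, hieq⟩ := List.getElem_of_mem h1n
    have hj : i < P'.toList.length + N'.toList.length := by omega
    have hk1 : ((P'.toList ++ N'.toList)[((⟨i, hj⟩ : Fin (P'.toList.length + N'.toList.length)) : ℕ)]'(hlen ⟨i, hj⟩)).1 = 1 := by
      show ((P'.toList ++ N'.toList)[i]'(hlen ⟨i, hj⟩)).1 = 1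
      rw [List.getElem_append_left hi, hieq]
    have hdvd := Finset.gcd_dvd (f := fun j : Fin (P'.toList.length + N'.toList.length) =>
      ((P'.toList ++ N'.toList)[(j : ℕ)]'(hlen j)).1)
      (Finset.mem_univ (⟨i, hj⟩ : Fin (P'.toList.length + N'.toList.length)))
    refine Nat.dvd_one.mp ?_
    rw [← hk1]
    exact hdvd
  exact ⟨P'.toList.length, N'.toList.length, hlpos,
    fun j => ((P'.toList ++ N'.toList)[(j : ℕ)]'(hlen j)).1,
    fun j => ((P'.toList ++ N'.toList)[(j : ℕ)]'(hlen j)).2,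
    fun j => (hkpos j).1, fun j => (hkpos j).2, hprodeq, hdeg, hgcd⟩
end
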